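/- For an unlabeled rooted tree τ with n vertices, the number of labeled rooted trees on a fixed n-element set of isomorphism type τ, divided by the number of increasing rooted trees on that set (with a fixed linear order) of isomorphism type τ, equals the tree factorial τ!. -/

import Mathlib

/-- A labeled rooted tree on the vertex set `Fin n`. -/
def IsRTree (n : ℕ) (rp : Fin n × (Fin n → Fin n)) : Prop :=
  rp.2 rp.1 = rp.1 ∧ ∀ j : Fin n, ∃ k : ℕ, rp.2^[k] j = rp.1

/-- Two labeled rooted trees are isomorphic if some relabeling bijection carries one to the
other. -/
def TreeRel (n : ℕ) (T T' : {rp : Fin n × (Fin n → Fin n) // IsRTree n rp}) : Prop :=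
  ∃ e : Equiv.Perm (Fin n), e T.val.1 = T'.val.1 ∧ ∀ i, e (T.val.2 i) = T'.val.2 (e i)

/-- Unlabeled rooted trees with `n` vertices: isomorphism classes of labeled rooted trees. -/
def UTree (n : ℕ) := Quot (TreeRel n)

/-- The number of vertices in the subtree rooted at `j` (the vertices weakly above `j`). -/
noncomputable def cardAbove (n : ℕ) (rp : Fin n × (Fin n → Fin n)) (j : Fin n) : ℕ :=
  Nat.card {i : Fin n // ∃ k : ℕ, rp.2^[k] i = j}

/-- The tree factorial `τ! = ∏_j |T_j|`. -/
noncomputable def treeFactorial (n : ℕ) (rp : Fin n × (Fin n → Fin n)) : ℕ :=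
  ∏ j : Fin n, cardAbove n rp j

open Finset

section Forest
variable {n : ℕ}

/-- helper: Nat.card of a sigma type over a finite index -/
lemma natCard_sigma {ι : Type*} [Fintype ι] (f : ι → Type*) [∀ i, Finite (f i)] :
    Nat.card (Σ i, f i) = ∑ i, Nat.card (f i) := by
  classical
  have : ∀ i, Fintype (f i) := fun i => Fintype.ofFinite (f i)
  simp [Nat.card_eq_fintype_card, Fintype.card_sigma]

open scoped Classical in
/-- vertices weakly above `v` within `s` -/
noncomputable def aboveF (s : Finset (Fin n)) (p : Fin n → Fin n) (v : Fin n) : Finset (Fin n) :=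
  s.filter (fun i => ∃ k : ℕ, p^[k] i = v)

noncomputable def tfF (s : Finset (Fin n)) (p : Fin n → Fin n) : ℕ :=
  ∏ v ∈ s, (aboveF s p v).card

def goodFun (s : Finset (Fin n)) (p : Fin n → Fin n) (f : Fin n → ℕ) : Prop :=
  (∀ j, j ∉ s → f j = 0) ∧ Set.InjOn f ↑s ∧ (∀ j ∈ s, f j < s.card) ∧
    (∀ j ∈ s, p j ≠ j → f (p j) < f j)

lemma goodFun_finite (s : Finset (Fin n)) (p : Fin n → Fin n) :
    Finite {f : Fin n → ℕ // goodFun s p f} := by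
  have hb : ∀ f : {f : Fin n → ℕ // goodFun s p f}, ∀ j, f.1 j < n + 1 := by
    intro f j
    by_cases hj : j ∈ s
    · have := f.2.2.2.1 j hj
      have hc : s.card ≤ n := by
        simpa using (Finset.card_le_univ s)
      omega
    · simp [f.2.1 j hj]
  apply Finite.of_injective (fun f : {f : Fin n → ℕ // goodFun s p f} =>
    fun j : Fin n => (⟨f.1 j, hb f j⟩ : Fin (n+1)))
  intro f g h
  apply Subtype.ext
  funext j
  have := congrFun h j
  simpa [Fin.ext_iff] using this

end Forest

section Step
variable {p : Fin n → Fin n} {ρ : Fin n}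

/-- the parent function after deleting the root `ρ` -/
def cutP (p : Fin n → Fin n) (ρ : Fin n) : Fin n → Fin n :=
  fun j => if p j = ρ then j else p j

lemma iterA (hρ : p ρ = ρ) {v : Fin n} (hv : v ≠ ρ) :
    ∀ (k : ℕ) (i : Fin n), p^[k] i = v → (cutP p ρ)^[k] i = v := by
  intro k
  induction k with
  | zero => intro i h; exact h
  | succ k ih =>
    intro i h
    rw [Function.iterate_succ_apply] at h ⊢
    by_cases hpi : p i = ρ
    · rw [hpi, Function.iterate_fixed hρ] at h
      exact absurd h.symm hv
    · rw [show cutP p ρ i = p i from if_neg hpi]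
      exact ih (p i) h

lemma iterB {v : Fin n} :
    ∀ (k : ℕ) (i : Fin n), (cutP p ρ)^[k] i = v → ∃ m, p^[m] i = v := by
  intro k
  induction k with
  | zero => intro i h; exact ⟨0, h⟩
  | succ k ih =>
    intro i h
    rw [Function.iterate_succ_apply] at h
    by_cases hpi : p i = ρ
    · rw [show cutP p ρ i = i from if_pos hpi] at h
      exact ih i h
    · rw [show cutP p ρ i = p i from if_neg hpi] at h
      obtain ⟨m, hm⟩ := ih (p i) h
      exact ⟨m + 1, by rwa [Function.iterate_add_apply, Function.iterate_one]⟩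
end Step

section Struct
variable {s : Finset (Fin n)} {p : Fin n → Fin n} {ρ : Fin n}

lemma iterMem (hs : ∀ j ∈ s, p j ∈ s) : ∀ (k : ℕ), ∀ j ∈ s, p^[k] j ∈ s := by
  intro k
  induction k with
  | zero => intro j hj; exact hj
  | succ k ih => intro j hj; rw [Function.iterate_succ_apply]; exact ih _ (hs j hj)

lemma cut_mapsTo (hs : ∀ j ∈ s, p j ∈ s) (hρs : ρ ∈ s) :
    ∀ j ∈ s.erase ρ, cutP p ρ j ∈ s.erase ρ := by
  intro j hj
  rw [Finset.mem_erase] at hj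
  by_cases hpj : p j = ρ
  · rw [show cutP p ρ j = j from if_pos hpj]; exact Finset.mem_erase.2 hj
  · rw [show cutP p ρ j = p j from if_neg hpj]
    exact Finset.mem_erase.2 ⟨hpj, hs j hj.2⟩

lemma above_erase (hs : ∀ j ∈ s, p j ∈ s) (hρ : p ρ = ρ) {v : Fin n} (hv : v ∈ s.erase ρ) :
    aboveF (s.erase ρ) (cutP p ρ) v = aboveF s p v := by
  classical
  have hvρ : v ≠ ρ := (Finset.mem_erase.1 hv).1
  ext i
  simp only [aboveF, Finset.mem_filter, Finset.mem_erase]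
  constructor
  · rintro ⟨⟨hiρ, his⟩, k, hk⟩
    exact ⟨his, iterB k i hk⟩
  · rintro ⟨his, k, hk⟩
    have hiρ : i ≠ ρ := by
      rintro rfl
      rw [Function.iterate_fixed hρ] at hk
      exact hvρ hk.symm
    exact ⟨⟨hiρ, his⟩, k, iterA hρ hvρ k i hk⟩

lemma tf_erase (hs : ∀ j ∈ s, p j ∈ s) (hρ : p ρ = ρ) (hρs : ρ ∈ s) :
    tfF s p = (aboveF s p ρ).card * tfF (s.erase ρ) (cutP p ρ) := by
  classical
  unfold tfF
  rw [← Finset.mul_prod_erase s _ hρs]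
  congr 1
  refine Finset.prod_congr rfl (fun v hv => ?_)
  rw [above_erase hs hρ hv]

lemma term_erase (hρ : p ρ = ρ)
    (hterm : ∀ j ∈ s, ∃ k : ℕ, p^[k+1] j = p^[k] j) :
    ∀ j ∈ s.erase ρ, ∃ k : ℕ, (cutP p ρ)^[k+1] j = (cutP p ρ)^[k] j := by
  intro j hj
  rw [Finset.mem_erase] at hj
  by_cases hhit : ∃ m : ℕ, p^[m] j = ρ
  · have h0 : ¬ (p^[0] j = ρ) := hj.1
    have hfind := Nat.find_spec hhit
    set m := Nat.find hhit with hm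
    have hm1 : 1 ≤ m := by
      rcases Nat.eq_zero_or_pos m with h | h
      · exact absurd (h ▸ hfind) h0
      · exact h
    set a := p^[m-1] j with ha
    have haρ : a ≠ ρ := Nat.find_min hhit (by omega)
    have hpa : p a = ρ := by
      have : p^[(m-1)+1] j = ρ := by rwa [show m - 1 + 1 = m by omega]
      rwa [Function.iterate_succ_apply'] at this
    have hA : (cutP p ρ)^[m-1] j = a := iterA hρ haρ (m-1) j rfl
    refine ⟨m - 1, ?_⟩
    rw [Function.iterate_succ_apply', hA, show cutP p ρ a = a from if_pos hpa]
  · push_neg at hhit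
    obtain ⟨k, hk⟩ := hterm j hj.2
    refine ⟨k, ?_⟩
    rw [iterA hρ (hhit (k+1)) (k+1) j rfl, iterA hρ (hhit k) k j rfl] at *
    · exact hk
end Struct

section Part
variable {s : Finset (Fin n)} {p : Fin n → Fin n}

lemma card_partition (hs : ∀ j ∈ s, p j ∈ s)
    (hterm : ∀ j ∈ s, ∃ k : ℕ, p^[k+1] j = p^[k] j) :
    ∑ ρ ∈ s.filter (fun j => p j = j), (aboveF s p ρ).card = s.card := by
  classical
  rw [← Finset.card_biUnion]
  · congr 1
    ext i
    simp only [Finset.mem_biUnion, Finset.mem_filter, aboveF]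
    constructor
    · rintro ⟨ρ, _, hmem, _⟩
      exact hmem
    · intro hi
      obtain ⟨k, hk⟩ := hterm i hi
      refine ⟨p^[k] i, ⟨iterMem hs k i hi, ?_⟩, hi, k, rfl⟩
      rwa [← Function.iterate_succ_apply' p k i]
  · intro x hx y hy hxy
    rw [Finset.mem_coe, Finset.mem_filter] at hx hy
    rw [Function.onFun, Finset.disjoint_left]
    intro i hix hiy
    rw [aboveF, Finset.mem_filter] at hix hiy
    obtain ⟨_, k1, h1⟩ := hix
    obtain ⟨_, k2, h2⟩ := hiy
    rcases le_total k1 k2 with h | h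
    · apply hxy
      have : p^[k2 - k1 + k1] i = x := by
        rw [Function.iterate_add_apply, h1, Function.iterate_fixed hx.2]
      rw [show k2 - k1 + k1 = k2 by omega, h2] at this
      exact this.symm
    · apply hxy
      have : p^[k1 - k2 + k2] i = y := by
        rw [Function.iterate_add_apply, h2, Function.iterate_fixed hy.2]
      rw [show k1 - k2 + k2 = k1 by omega, h1] at this
      exact this
end Part

section Erec
variable {s : Finset (Fin n)} {p : Fin n → Fin n}

lemma good_image {f : Fin n → ℕ} (hf : goodFun s p f) :
    Finset.image f s = Finset.range s.card := by
  classical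
  apply Finset.eq_of_subset_of_card_le
  · intro x hx
    rw [Finset.mem_image] at hx
    obtain ⟨j, hj, rfl⟩ := hx
    exact Finset.mem_range.2 (hf.2.2.1 j hj)
  · rw [Finset.card_range, Finset.card_image_of_injOn hf.2.1]

lemma good_zero {f : Fin n → ℕ} (hf : goodFun s p f) (hne : s.Nonempty) :
    ∃ z ∈ s, f z = 0 ∧ p z = z := by
  classical
  have h0 : (0 : ℕ) ∈ Finset.image f s := by
    rw [good_image hf]
    exact Finset.mem_range.2 (Finset.card_pos.2 hne)
  rw [Finset.mem_image] at h0
  obtain ⟨z, hz, hz0⟩ := h0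
  refine ⟨z, hz, hz0, ?_⟩
  by_contra hpz
  have := hf.2.2.2 z hz hpz
  omega

/-- insert a root `ρ` below a good function on `s.erase ρ` -/
def insRoot (s : Finset (Fin n)) (ρ : Fin n) (f : Fin n → ℕ) : Fin n → ℕ :=
  fun j => if j = ρ then 0 else if j ∈ s then f j + 1 else 0

lemma insRoot_good {ρ : Fin n} (hs : ∀ j ∈ s, p j ∈ s) (hρs : ρ ∈ s) (hρ : p ρ = ρ)
    {f : Fin n → ℕ} (hf : goodFun (s.erase ρ) (cutP p ρ) f) :
    goodFun s p (insRoot s ρ f) := by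
  classical
  have hcard : (s.erase ρ).card + 1 = s.card := Finset.card_erase_add_one hρs
  refine ⟨?_, ?_, ?_, ?_⟩
  · intro j hj
    have : j ≠ ρ := fun h => hj (h ▸ hρs)
    simp [insRoot, this, hj]
  · intro j1 h1 j2 h2 he
    simp only [Finset.mem_coe] at h1 h2
    by_cases e1 : j1 = ρ <;> by_cases e2 : j2 = ρ
    · rw [e1, e2]
    · simp [insRoot, e1, e2, h2] at he
    · simp [insRoot, e1, e2, h1] at he
    · simp only [insRoot, if_neg e1, if_neg e2, if_pos h1, if_pos h2] at he
      exact hf.2.1 (Finset.mem_coe.2 (Finset.mem_erase.2 ⟨e1, h1⟩))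
        (Finset.mem_coe.2 (Finset.mem_erase.2 ⟨e2, h2⟩)) (by omega)
  · intro j hj
    by_cases e : j = ρ
    · simp only [insRoot, if_pos e]
      exact Finset.card_pos.2 ⟨ρ, hρs⟩
    · simp only [insRoot, if_neg e, if_pos hj]
      have := hf.2.2.1 j (Finset.mem_erase.2 ⟨e, hj⟩)
      omega
  · intro j hj hpj
    have e : j ≠ ρ := fun h => hpj (by rw [h]; exact hρ)
    by_cases epj : p j = ρ
    · simp only [insRoot, if_pos epj, if_neg e, if_pos hj]
      omega
    · have hpjs : p j ∈ s := hs j hj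
      simp only [insRoot, if_neg epj, if_neg e, if_pos hj, if_pos hpjs]
      have hcut : cutP p ρ j = p j := if_neg epj
      have := hf.2.2.2 j (Finset.mem_erase.2 ⟨e, hj⟩) (by rw [hcut]; exact hpj)
      rw [hcut] at this
      omega

lemma restrict_good {ρ : Fin n} (hs : ∀ j ∈ s, p j ∈ s) (hρs : ρ ∈ s)
    {f : Fin n → ℕ} (hf : goodFun s p f) (hz0 : f ρ = 0) (hρ : p ρ = ρ) :
    goodFun (s.erase ρ) (cutP p ρ) (fun j => if j ∈ s.erase ρ then f j - 1 else 0) := by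
  classical
  have hcard : (s.erase ρ).card + 1 = s.card := Finset.card_erase_add_one hρs
  have hpos : ∀ j ∈ s.erase ρ, 1 ≤ f j := by
    intro j hj
    rw [Finset.mem_erase] at hj
    rcases Nat.eq_zero_or_pos (f j) with h | h
    · exact absurd (hf.2.1 (Finset.mem_coe.2 hj.2) (Finset.mem_coe.2 hρs) (by omega)) hj.1
    · exact h
  refine ⟨?_, ?_, ?_, ?_⟩
  · intro j hj; simp [hj]
  · intro j1 h1 j2 h2 he
    simp only [Finset.mem_coe] at h1 h2
    simp only [if_pos h1, if_pos h2] at he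
    have := hpos j1 h1
    have := hpos j2 h2
    exact hf.2.1 (Finset.mem_coe.2 (Finset.mem_erase.1 h1).2)
      (Finset.mem_coe.2 (Finset.mem_erase.1 h2).2) (by omega)
  · intro j hj
    simp only [if_pos hj]
    have := hf.2.2.1 j (Finset.mem_erase.1 hj).2
    have := hpos j hj
    omega
  · intro j hj hcj
    have epj : p j ≠ ρ := by
      intro h
      exact hcj (if_pos h)
    have hcut : cutP p ρ j = p j := if_neg epj
    rw [hcut] at hcj ⊢
    have hjs := (Finset.mem_erase.1 hj).2
    have hpje : p j ∈ s.erase ρ := Finset.mem_erase.2 ⟨epj, hs j hjs⟩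
    simp only [if_pos hj, if_pos hpje]
    have h1 := hf.2.2.2 j hjs hcj
    have := hpos j hj
    have := hpos _ hpje
    omega

lemma E_rec (hs : ∀ j ∈ s, p j ∈ s) (hne : s.Nonempty) :
    Nat.card {f : Fin n → ℕ // goodFun s p f}
      = ∑ ρ ∈ s.filter (fun j => p j = j),
          Nat.card {f : Fin n → ℕ // goodFun (s.erase ρ) (cutP p ρ) f} := by
  classical
  have hmem : ∀ ρ : {x // x ∈ s.filter (fun j => p j = j)}, ρ.1 ∈ s ∧ p ρ.1 = ρ.1 := by
    intro ρ
    have := ρ.2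
    rw [Finset.mem_filter] at this
    exact this
  have key : Nat.card (Σ ρ : {x // x ∈ s.filter (fun j => p j = j)},
        {f : Fin n → ℕ // goodFun (s.erase ρ.1) (cutP p ρ.1) f})
      = Nat.card {f : Fin n → ℕ // goodFun s p f} := by
    apply Nat.card_eq_of_bijective (fun x =>
      ⟨insRoot s x.1.1 x.2.1, insRoot_good hs (hmem x.1).1 (hmem x.1).2 x.2.2⟩)
    constructor
    · rintro ⟨⟨ρ1, hρ1⟩, f1, hf1⟩ ⟨⟨ρ2, hρ2⟩, f2, hf2⟩ he
      have heq : insRoot s ρ1 f1 = insRoot s ρ2 f2 := congrArg Subtype.val he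
      have hρρ : ρ1 = ρ2 := by
        by_contra hne
        have h1 : insRoot s ρ1 f1 ρ1 = 0 := by simp [insRoot]
        have h3 : insRoot s ρ2 f2 ρ1 = f2 ρ1 + 1 := by
          simp [insRoot, hne, (Finset.mem_filter.1 hρ1).1]
        rw [heq, h3] at h1
        omega
      subst hρρ
      have hff : f1 = f2 := by
        funext j
        by_cases hj : j ∈ s.erase ρ1
        · have := congrFun heq j
          have hjρ : j ≠ ρ1 := (Finset.mem_erase.1 hj).1
          have hjs : j ∈ s := (Finset.mem_erase.1 hj).2
          simp only [insRoot, if_neg hjρ, if_pos hjs] at this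
          omega
        · rw [hf1.1 j hj, hf2.1 j hj]
      subst hff
      rfl
    · rintro ⟨f, hf⟩
      obtain ⟨z, hzs, hz0, hzρ⟩ := good_zero hf hne
      refine ⟨⟨⟨z, Finset.mem_filter.2 ⟨hzs, hzρ⟩⟩,
        ⟨fun j => if j ∈ s.erase z then f j - 1 else 0, restrict_good hs hzs hf hz0 hzρ⟩⟩, ?_⟩
      apply Subtype.ext
      funext j
      by_cases ej : j = z
      · subst ej; simp [insRoot, hz0]
      · by_cases hjs : j ∈ s
        · have hj : j ∈ s.erase z := Finset.mem_erase.2 ⟨ej, hjs⟩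
          have hpos : 1 ≤ f j := by
            rcases Nat.eq_zero_or_pos (f j) with h | h
            · exact absurd (hf.2.1 (Finset.mem_coe.2 hjs) (Finset.mem_coe.2 hzs) (by omega)) ej
            · exact h
          simp only [insRoot, if_neg ej, if_pos hjs, if_pos hj]
          omega
        · have : j ∉ s.erase z := fun h => hjs (Finset.mem_erase.1 h).2
          simp only [insRoot, if_neg ej, if_neg hjs, hf.1 j hjs]
  rw [← key]
  have : ∀ ρ : {x // x ∈ s.filter (fun j => p j = j)}, Finite
      {f : Fin n → ℕ // goodFun (s.erase ρ.1) (cutP p ρ.1) f} :=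
    fun ρ => goodFun_finite _ _
  rw [natCard_sigma]
  exact Finset.sum_coe_sort (s.filter fun j => p j = j)
    (fun ρ => Nat.card {f : Fin n → ℕ // goodFun (s.erase ρ) (cutP p ρ) f})
end Erec

theorem forest_count : ∀ (N : ℕ) (s : Finset (Fin n)) (p : Fin n → Fin n),
    s.card = N → (∀ j ∈ s, p j ∈ s) → (∀ j ∈ s, ∃ k : ℕ, p^[k+1] j = p^[k] j) →
    Nat.card {f : Fin n → ℕ // goodFun s p f} * tfF s p = Nat.factorial N := by
  intro N
  induction N using Nat.strong_induction_on with
  | _ N ih =>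
  intro s p hcard hs hterm
  rcases Nat.eq_zero_or_pos N with h0 | hpos
  · subst h0
    rw [Finset.card_eq_zero] at hcard
    subst hcard
    have hu : Nat.card {f : Fin n → ℕ // goodFun (∅ : Finset (Fin n)) p f} = 1 := by
      have : Unique {f : Fin n → ℕ // goodFun (∅ : Finset (Fin n)) p f} := by
        refine ⟨⟨⟨fun _ => 0, ?_, ?_, ?_, ?_⟩⟩, ?_⟩
        · intro j _; rfl
        · intro a ha; simp at ha
        · intro j hj; simp at hj
        · intro j hj; simp at hj
        · rintro ⟨f, hf⟩
          apply Subtype.ext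
          funext j
          exact hf.1 j (Finset.notMem_empty j)
      rw [Nat.card_eq_one_iff_unique]
      exact ⟨this.instSubsingleton, ⟨this.default⟩⟩
    rw [hu, tfF, Finset.prod_empty]
    rfl
  · have hne : s.Nonempty := by
      rw [← Finset.card_pos, hcard]; exact hpos
    classical
    rw [E_rec hs hne, Finset.sum_mul]
    have hterm' : ∀ ρ ∈ s.filter (fun j => p j = j),
        Nat.card {f : Fin n → ℕ // goodFun (s.erase ρ) (cutP p ρ) f} * tfF s p
          = Nat.factorial (N - 1) * (aboveF s p ρ).card := by
      intro ρ hρmem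
      rw [Finset.mem_filter] at hρmem
      obtain ⟨hρs, hρ⟩ := hρmem
      rw [tf_erase hs hρ hρs]
      have hrec := ih (N - 1) (by omega) (s.erase ρ) (cutP p ρ)
        (by rw [Finset.card_erase_of_mem hρs, hcard])
        (by intro j hj; exact cut_mapsTo hs hρs j hj)
        (term_erase hρ hterm)
      rw [← mul_assoc, mul_right_comm, hrec, mul_comm]
    rw [Finset.sum_congr rfl hterm', ← Finset.mul_sum, card_partition hs hterm, hcard]
    rw [mul_comm]
    rw [← Nat.succ_pred_eq_of_pos hpos]
    rw [Nat.factorial_succ]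
    simp

/- ### the relabeling action -/
section Act
variable {n : ℕ}

def act (e : Equiv.Perm (Fin n)) (rp : Fin n × (Fin n → Fin n)) : Fin n × (Fin n → Fin n) :=
  (e rp.1, e ∘ rp.2 ∘ e.symm)

lemma act_mul (σ e : Equiv.Perm (Fin n)) (rp : Fin n × (Fin n → Fin n)) :
    act (σ * e) rp = act σ (act e rp) := by
  unfold act
  refine Prod.ext rfl ?_
  funext x
  simp [Equiv.Perm.mul_apply, Equiv.Perm.inv_def, Equiv.symm_apply_apply]
  rfl

lemma act_one (rp : Fin n × (Fin n → Fin n)) : act 1 rp = rp := by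
  unfold act
  refine Prod.ext rfl ?_
  funext x
  simp
  rfl

lemma act_inv_act (e : Equiv.Perm (Fin n)) (rp : Fin n × (Fin n → Fin n)) :
    act e⁻¹ (act e rp) = rp := by
  rw [← act_mul, inv_mul_cancel, act_one]

lemma act_iter (e : Equiv.Perm (Fin n)) (rp : Fin n × (Fin n → Fin n)) :
    ∀ (k : ℕ) (x : Fin n), (act e rp).2^[k] x = e (rp.2^[k] (e.symm x)) := by
  intro k
  induction k with
  | zero => intro x; simp
  | succ k ih =>
    intro x
    rw [Function.iterate_succ_apply, Function.iterate_succ_apply]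
    rw [ih ((act e rp).2 x)]
    simp [act]

lemma act_isRTree (e : Equiv.Perm (Fin n)) {rp : Fin n × (Fin n → Fin n)}
    (h : IsRTree n rp) : IsRTree n (act e rp) := by
  constructor
  · show (e ∘ rp.2 ∘ e.symm) (e rp.1) = e rp.1
    simp [h.1]
  · intro j
    obtain ⟨k, hk⟩ := h.2 (e.symm j)
    exact ⟨k, by rw [act_iter, hk]; rfl⟩

def actT (e : Equiv.Perm (Fin n)) (T : {rp : Fin n × (Fin n → Fin n) // IsRTree n rp}) :
    {rp : Fin n × (Fin n → Fin n) // IsRTree n rp} :=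
  ⟨act e T.val, act_isRTree e T.2⟩

lemma treeRel_actT (e : Equiv.Perm (Fin n)) (T : {rp : Fin n × (Fin n → Fin n) // IsRTree n rp}) :
    TreeRel n T (actT e T) := by
  refine ⟨e, rfl, ?_⟩
  intro i
  show e (T.val.2 i) = (e ∘ T.val.2 ∘ e.symm) (e i)
  simp

lemma quot_actT (e : Equiv.Perm (Fin n)) (T : {rp : Fin n × (Fin n → Fin n) // IsRTree n rp}) :
    Quot.mk (TreeRel n) (actT e T) = Quot.mk (TreeRel n) T :=
  (Quot.sound (treeRel_actT e T)).symm

lemma treeRel_equivalence : Equivalence (TreeRel n) := by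
  refine ⟨fun T => ⟨1, rfl, fun i => rfl⟩, ?_, ?_⟩
  · rintro T T' ⟨e, h1, h2⟩
    refine ⟨e⁻¹, by rw [← h1]; simp, ?_⟩
    intro i
    have := h2 (e⁻¹ i)
    simp only [show ∀ x, e (e⁻¹ x) = x from fun x => e.apply_symm_apply x] at this
    rw [← this]
    simp
  · rintro T T' T'' ⟨e, h1, h2⟩ ⟨e', h1', h2'⟩
    refine ⟨e' * e, by simp [Equiv.Perm.mul_apply, h1, h1'], ?_⟩
    intro i
    simp [Equiv.Perm.mul_apply, h2, h2']

lemma treeRel_act_eq {T T' : {rp : Fin n × (Fin n → Fin n) // IsRTree n rp}}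
    (h : TreeRel n T T') : ∃ e : Equiv.Perm (Fin n), actT e T = T' := by
  obtain ⟨e, h1, h2⟩ := h
  refine ⟨e, Subtype.ext (Prod.ext h1 ?_)⟩
  funext i
  show (e ∘ T.val.2 ∘ e.symm) i = T'.val.2 i
  have := h2 (e.symm i)
  simp only [Function.comp_apply]
  rw [this, Equiv.apply_symm_apply]
end Act

section Translate
variable {n : ℕ}

/-- increasing condition -/
def Inc (rp : Fin n × (Fin n → Fin n)) : Prop := ∀ j : Fin n, j ≠ rp.1 → rp.2 j < j

lemma root_iff {rp : Fin n × (Fin n → Fin n)} (h : IsRTree n rp) (j : Fin n) :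
    rp.2 j = j ↔ j = rp.1 := by
  constructor
  · intro hj
    obtain ⟨k, hk⟩ := h.2 j
    rw [Function.iterate_fixed hj] at hk
    exact hk
  · rintro rfl; exact h.1

lemma inc_act_iff {rp : Fin n × (Fin n → Fin n)} (h : IsRTree n rp) (σ : Equiv.Perm (Fin n)) :
    Inc (act σ rp) ↔ ∀ j : Fin n, rp.2 j ≠ j → σ (rp.2 j) < σ j := by
  constructor
  · intro hinc j hj
    have hjr : j ≠ rp.1 := fun e => hj ((root_iff h j).2 e)
    have := hinc (σ j) (fun e => hjr (σ.injective e))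
    show _ < σ j
    simpa [act] using this
  · intro hmono j hj
    have hi : σ.symm j ≠ rp.1 := fun e => hj (by rw [← σ.apply_symm_apply j, e]; rfl)
    have := hmono (σ.symm j) (fun e => hi ((root_iff h _).1 e))
    show (σ ∘ rp.2 ∘ σ.symm) j < j
    simpa using this

lemma cardAbove_eq (rp : Fin n × (Fin n → Fin n)) (j : Fin n) :
    cardAbove n rp j = (aboveF Finset.univ rp.2 j).card := by
  classical
  rw [cardAbove, Nat.card_eq_fintype_card, Fintype.card_subtype]
  rw [aboveF]

lemma treeFactorial_eq (rp : Fin n × (Fin n → Fin n)) :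
    treeFactorial n rp = tfF Finset.univ rp.2 := by
  rw [treeFactorial, tfF]
  exact Finset.prod_congr rfl (fun j _ => cardAbove_eq rp j)

lemma perm_good {rp : Fin n × (Fin n → Fin n)} (h : IsRTree n rp)
    (σ : Equiv.Perm (Fin n)) (hσ : Inc (act σ rp)) :
    goodFun Finset.univ rp.2 (fun j => (σ j : ℕ)) := by
  refine ⟨fun j hj => absurd (Finset.mem_univ j) hj, ?_, ?_, ?_⟩
  · intro a _ b _ hab
    exact σ.injective (Fin.ext hab)
  · intro j _
    simpa using (σ j).2
  · intro j _ hj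
    exact (inc_act_iff h σ).1 hσ j hj

/-- the count of increasing relabelings, times the tree factorial, is n! -/
lemma lin_count {rp : Fin n × (Fin n → Fin n)} (h : IsRTree n rp) :
    Nat.card {σ : Equiv.Perm (Fin n) // Inc (act σ rp)} * treeFactorial n rp
      = Nat.factorial n := by
  classical
  rw [treeFactorial_eq]
  have hcardu : (Finset.univ : Finset (Fin n)).card = n := by simp
  have key := forest_count n (Finset.univ : Finset (Fin n)) rp.2 hcardu
    (fun j _ => Finset.mem_univ _)
    (fun j _ => by
      obtain ⟨k, hk⟩ := h.2 j
      exact ⟨k, by rw [Function.iterate_succ_apply', hk, h.1]⟩)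
  rw [← key]
  congr 1
  apply Nat.card_eq_of_bijective
    (fun σ : {σ : Equiv.Perm (Fin n) // Inc (act σ rp)} =>
      (⟨fun j => (σ.1 j : ℕ), perm_good h σ.1 σ.2⟩ : {f : Fin n → ℕ // goodFun Finset.univ rp.2 f}))
  constructor
  · intro σ1 σ2 he
    apply Subtype.ext
    apply Equiv.ext
    intro j
    have := congrFun (congrArg Subtype.val he) j
    exact Fin.ext this
  · rintro ⟨f, hoff, hinj, hlt, hmono⟩
    have hfb : ∀ j, f j < n := fun j => by
      have := hlt j (Finset.mem_univ j)
      omega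
    have hginj : Function.Injective (fun j => (⟨f j, hfb j⟩ : Fin n)) := by
      intro a b hab
      apply hinj (Finset.mem_coe.2 (Finset.mem_univ a)) (Finset.mem_coe.2 (Finset.mem_univ b))
      exact congrArg Fin.val hab
    have hgbij := Finite.injective_iff_bijective.1 hginj
    refine ⟨⟨Equiv.ofBijective _ hgbij, ?_⟩, ?_⟩
    · rw [inc_act_iff h]
      intro j hj
      exact hmono j (Finset.mem_univ j) hj
    · apply Subtype.ext
      funext j
      rfl
end Translate

lemma act_act_inv {n : ℕ} (e : Equiv.Perm (Fin n)) (rp : Fin n × (Fin n → Fin n)) :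
    act e (act e⁻¹ rp) = rp := by
  have := act_inv_act e⁻¹ rp
  rwa [inv_inv] at this

/-- For an unlabeled rooted tree `τ` with `n` vertices, the number `r(τ)` of labeled rooted
trees on `Fin n` of isomorphism type `τ` equals the tree factorial `τ!` times the number
`i(τ)` of increasing rooted trees (parent strictly decreasing) of type `τ`. -/
theorem stmt6 (n : ℕ) (hn : 1 ≤ n) (τ : UTree n) :
    Nat.card {T : {rp : Fin n × (Fin n → Fin n) // IsRTree n rp} // Quot.mk (TreeRel n) T = τ}
      = treeFactorial n τ.out.val *
        Nat.card {T : {rp : Fin n × (Fin n → Fin n) // IsRTree n rp} //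
          (∀ j : Fin n, j ≠ T.val.1 → T.val.2 j < j) ∧ Quot.mk (TreeRel n) T = τ} := by
  classical
  have hrel : ∀ T : {rp : Fin n × (Fin n → Fin n) // IsRTree n rp},
      Quot.mk (TreeRel n) T = τ → ∃ e : Equiv.Perm (Fin n), actT e τ.out = T := by
    intro T hT
    apply treeRel_act_eq
    have : Quot.mk (TreeRel n) τ.out = Quot.mk (TreeRel n) T := by exact (Quot.out_eq (r := TreeRel n) τ).trans hT.symm
    exact (treeRel_equivalence).eqvGen_iff.1 (Quot.eq.1 this)
  set R := {T : {rp : Fin n × (Fin n → Fin n) // IsRTree n rp} // Quot.mk (TreeRel n) T = τ}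
    with hR
  let eT : R → Equiv.Perm (Fin n) := fun T => (hrel T.1 T.2).choose
  have heT : ∀ T : R, actT (eT T) τ.out = T.1 := fun T => (hrel T.1 T.2).choose_spec
  have heT' : ∀ T : R, act (eT T) τ.out.val = T.1.val :=
    fun T => congrArg Subtype.val (heT T)
  set I := {T : {rp : Fin n × (Fin n → Fin n) // IsRTree n rp} //
      (∀ j : Fin n, j ≠ T.val.1 → T.val.2 j < j) ∧ Quot.mk (TreeRel n) T = τ} with hI
  set S := {σ : Equiv.Perm (Fin n) // Inc (act σ τ.out.val)} with hS
  set P := {x : {rp : Fin n × (Fin n → Fin n) // IsRTree n rp} × Equiv.Perm (Fin n) //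
      Quot.mk (TreeRel n) x.1 = τ ∧ Inc (act x.2 x.1.val)} with hP
  -- equivalence 1 : P ≃ I × Perm
  have E1 : P ≃ I × Equiv.Perm (Fin n) := by
    refine ⟨fun x => (⟨actT x.1.2 x.1.1, ?_, ?_⟩, x.1.2),
           fun y => ⟨(actT y.2⁻¹ y.1.1, y.2), ?_, ?_⟩, ?_, ?_⟩
    · exact x.2.2
    · rw [quot_actT, x.2.1]
    · rw [quot_actT, y.1.2.2]
    · show Inc (act y.2 (act y.2⁻¹ y.1.1.val))
      rw [act_act_inv]
      exact y.1.2.1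
    · rintro ⟨⟨T, σ⟩, h1, h2⟩
      apply Subtype.ext
      show (actT σ⁻¹ (actT σ T), σ) = (T, σ)
      refine Prod.ext ?_ rfl
      exact Subtype.ext (act_inv_act σ T.val)
    · rintro ⟨⟨T, h1, h2⟩, σ⟩
      refine Prod.ext ?_ rfl
      apply Subtype.ext
      exact Subtype.ext (act_act_inv σ T.val)
  -- equivalence 2 : P ≃ R × S
  have E2 : P ≃ R × S := by
    refine ⟨fun x => (⟨x.1.1, x.2.1⟩, ⟨x.1.2 * eT ⟨x.1.1, x.2.1⟩, ?_⟩),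
           fun y => ⟨(y.1.1, y.2.1 * (eT y.1)⁻¹), y.1.2, ?_⟩, ?_, ?_⟩
    · rw [act_mul, heT' ⟨x.1.1, x.2.1⟩]
      exact x.2.2
    · show Inc (act (y.2.1 * (eT y.1)⁻¹) y.1.1.val)
      rw [act_mul, ← heT' y.1, act_inv_act]
      exact y.2.2
    · rintro ⟨⟨T, σ⟩, h1, h2⟩
      apply Subtype.ext
      show (T, σ * eT ⟨T, h1⟩ * (eT ⟨T, h1⟩)⁻¹) = (T, σ)
      refine Prod.ext rfl ?_
      group
    · rintro ⟨⟨T, h1⟩, ⟨ρ, h2⟩⟩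
      refine Prod.ext rfl ?_
      apply Subtype.ext
      show ρ * (eT ⟨T, h1⟩)⁻¹ * eT ⟨T, h1⟩ = ρ
      group
  have c1 : Nat.card P = Nat.card I * Nat.factorial n := by
    rw [Nat.card_congr E1, Nat.card_prod]
    congr 1
    rw [Nat.card_eq_fintype_card, Fintype.card_perm, Fintype.card_fin]
  have c2 : Nat.card P = Nat.card R * Nat.card S := by
    rw [Nat.card_congr E2, Nat.card_prod]
  have c3 : Nat.card S * treeFactorial n τ.out.val = Nat.factorial n := lin_count τ.out.2
  have key : Nat.card R * Nat.factorial n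
      = (treeFactorial n τ.out.val * Nat.card I) * Nat.factorial n := by
    calc Nat.card R * Nat.factorial n
        = Nat.card R * (Nat.card S * treeFactorial n τ.out.val) := by rw [c3]
      _ = (Nat.card R * Nat.card S) * treeFactorial n τ.out.val := by ring
      _ = (Nat.card I * Nat.factorial n) * treeFactorial n τ.out.val := by rw [← c2, c1]
      _ = (treeFactorial n τ.out.val * Nat.card I) * Nat.factorial n := by ring
  exact Nat.eq_of_mul_eq_mul_right (Nat.factorial_pos n) key
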